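/- Let X be a set and let 𝒜 be a finite family of subsets of X such that there exist no A, B ∈ 𝒜 with A ∩ B ≠ ∅, A \ B ≠ ∅, and B \ A ≠ ∅ (i.e., any two members of 𝒜 are either disjoint or one contains the other). Then there exists a linear order < on X such that every A ∈ 𝒜 is a <-convex subset of X. -/

import Mathlib

/-- `S` is convex with respect to the strict order `r`. -/
def IsRConvex {X : Type*} (r : X → X → Prop) (S : Set X) : Prop :=
  ∀ a b c : X, r a b → r b c → a ∈ S → c ∈ S → b ∈ S

theorem aux_laminar {X : Type*} (𝒜 : Finset (Set X))
    (h : ∀ A ∈ 𝒜, ∀ B ∈ 𝒜, A ∩ B = ∅ ∨ A \ B = ∅ ∨ B \ A = ∅) :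
    ∃ r : X → X → Prop, IsStrictTotalOrder X r ∧ ∀ A ∈ 𝒜, IsRConvex r A := by
  classical
  induction 𝒜 using Finset.strongInduction with
  | _ 𝒜 ih =>
    rcases 𝒜.eq_empty_or_nonempty with rfl | hne
    · refine ⟨WellOrderingRel, inferInstance, by simp⟩
    obtain ⟨A, hA, hmin⟩ : ∃ A ∈ 𝒜, ∀ B ∈ 𝒜, ¬ B < A := by
      obtain ⟨A, hAm⟩ := Finset.exists_minimal hne
      exact ⟨A, hAm.prop, fun B hB hlt => hAm.not_lt hB hlt⟩
    obtain ⟨r, hr, hconv⟩ := ih (𝒜.erase A) (Finset.erase_ssubset hA)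
      (fun B hB C hC => h B (Finset.mem_of_mem_erase hB) C (Finset.mem_of_mem_erase hC))
    have hmem : ∀ B ∈ 𝒜, B = A ∨ B ∈ 𝒜.erase A := by
      intro B hB
      rcases eq_or_ne B A with rfl | hBA
      · exact Or.inl rfl
      · exact Or.inr (Finset.mem_erase.mpr ⟨hBA, hB⟩)
    rcases A.eq_empty_or_nonempty with rfl | ⟨a₀, ha₀⟩
    · refine ⟨r, hr, ?_⟩
      intro B hB
      rcases hmem B hB with rfl | hB'
      · intro a b c _ _ ha _; exact ha
      · exact hconv B hB'
    -- main case
    set key : X → X := fun x => if x ∈ A then a₀ else x with hkeydef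
    have hkeyA : ∀ x, x ∈ A → key x = a₀ := fun x hx => by simp [hkeydef, hx]
    have hkeyN : ∀ x, x ∉ A → key x = x := fun x hx => by simp [hkeydef, hx]
    have hkeyNA : ∀ x, x ∉ A → key x ≠ a₀ := by
      intro x hx
      rw [hkeyN x hx]
      rintro rfl; exact hx ha₀
    have hasym : ∀ x y, r x y → r y x → False := by
      intro x y hxy hyx
      exact hr.irrefl x (hr.trans _ _ _ hxy hyx)
    set r' : X → X → Prop := fun x y => r (key x) (key y) ∨ (x ∈ A ∧ y ∈ A ∧ r x y)
      with hr'def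
    have hsto : IsStrictTotalOrder X r' := by
      refine { trichotomous := ?_, irrefl := ?_, trans := ?_ }
      · intro x y hn1 hn2
        refine ((?_ : r' x y ∨ x = y ∨ r' y x).resolve_left hn1).resolve_right hn2
        rcases Std.Trichotomous.rel_or_eq_or_rel_swap (i := hr.toTrichotomous) (a := key x) (b := key y) with hxy | heq | hyx
        · exact Or.inl (Or.inl hxy)
        · by_cases hx : x ∈ A
          · by_cases hy : y ∈ A
            · rcases Std.Trichotomous.rel_or_eq_or_rel_swap (i := hr.toTrichotomous) (a := x) (b := y) with h1 | h1 | h1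
              · exact Or.inl (Or.inr ⟨hx, hy, h1⟩)
              · exact Or.inr (Or.inl h1)
              · exact Or.inr (Or.inr (Or.inr ⟨hy, hx, h1⟩))
            · exact absurd (hkeyA x hx ▸ heq).symm (hkeyNA y hy)
          · by_cases hy : y ∈ A
            · exact absurd (hkeyA y hy ▸ heq) (hkeyNA x hx)
            · rw [hkeyN x hx, hkeyN y hy] at heq
              exact Or.inr (Or.inl heq)
        · exact Or.inr (Or.inr (Or.inl hyx))
      · intro x hx
        rcases hx with hx | ⟨_, _, hx⟩
        · exact hr.irrefl _ hx
        · exact hr.irrefl _ hx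
      · rintro x y z (hxy | ⟨hx, hy, hxy⟩) (hyz | ⟨hy', hz, hyz⟩)
        · exact Or.inl (hr.trans _ _ _ hxy hyz)
        · refine Or.inl ?_
          rw [hkeyA y hy', hkeyA z hz] at *
          exact hxy
        · refine Or.inl ?_
          rw [hkeyA x hx, hkeyA y hy] at *
          exact hyz
        · exact Or.inr ⟨hx, hz, hr.trans _ _ _ hxy hyz⟩
    refine ⟨r', hsto, ?_⟩
    intro B hB
    rcases hmem B hB with rfl | hB'
    · -- B = A
      intro x y z hxy hyz hx hz
      by_contra hy
      have h1 : r (key x) (key y) := by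
        rcases hxy with h1 | ⟨_, hy', _⟩
        · exact h1
        · exact absurd hy' hy
      have h2 : r (key y) (key z) := by
        rcases hyz with h2 | ⟨hy', _, _⟩
        · exact h2
        · exact absurd hy' hy
      rw [hkeyA x hx] at h1
      rw [hkeyA z hz] at h2
      rw [hkeyN y hy] at h1 h2
      exact hasym _ _ h1 h2
    · have hBconv := hconv B hB'
      have hBA : B ≠ A := (Finset.mem_erase.mp hB').1
      rcases h A hA B (Finset.mem_of_mem_erase hB') with hdisj | hsub | hsup
      · -- A ∩ B = ∅
        have hd : ∀ x, x ∈ A → x ∉ B := by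
          intro x hxA hxB
          exact Set.eq_empty_iff_forall_notMem.mp hdisj x ⟨hxA, hxB⟩
        intro x y z hxy hyz hx hz
        have hxA : x ∉ A := fun hc => hd x hc hx
        have hzA : z ∉ A := fun hc => hd z hc hz
        by_cases hy : y ∈ A
        · have h1 : r x a₀ := by
            rcases hxy with h1 | ⟨hx', _, _⟩
            · rwa [hkeyN x hxA, hkeyA y hy] at h1
            · exact absurd hx' hxA
          have h2 : r a₀ z := by
            rcases hyz with h2 | ⟨_, hz', _⟩
            · rwa [hkeyA y hy, hkeyN z hzA] at h2
            · exact absurd hz' hzA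
          exact absurd (hBconv x a₀ z h1 h2 hx hz) (hd a₀ ha₀)
        · have h1 : r x y := by
            rcases hxy with h1 | ⟨hx', _, _⟩
            · rwa [hkeyN x hxA, hkeyN y hy] at h1
            · exact absurd hx' hxA
          have h2 : r y z := by
            rcases hyz with h2 | ⟨hy', _, _⟩
            · rwa [hkeyN y hy, hkeyN z hzA] at h2
            · exact absurd hy' hy
          exact hBconv x y z h1 h2 hx hz
      · -- A ⊆ B
        have hAB : A ⊆ B := Set.diff_eq_empty.mp hsub
        intro x y z hxy hyz hx hz
        by_cases hy : y ∈ A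
        · exact hAB hy
        have hkx : key x ∈ B := by
          by_cases hxA : x ∈ A
          · rw [hkeyA x hxA]; exact hAB ha₀
          · rw [hkeyN x hxA]; exact hx
        have hkz : key z ∈ B := by
          by_cases hzA : z ∈ A
          · rw [hkeyA z hzA]; exact hAB ha₀
          · rw [hkeyN z hzA]; exact hz
        have h1 : r (key x) y := by
          rcases hxy with h1 | ⟨_, hy', _⟩
          · rwa [hkeyN y hy] at h1
          · exact absurd hy' hy
        have h2 : r y (key z) := by
          rcases hyz with h2 | ⟨hy', _, _⟩
          · rwa [hkeyN y hy] at h2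
          · exact absurd hy' hy
        exact hBconv (key x) y (key z) h1 h2 hkx hkz
      · -- B ⊆ A : contradicts minimality
        have hBA' : B ⊆ A := Set.diff_eq_empty.mp hsup
        exact absurd (lt_of_le_of_ne hBA' hBA) (hmin B (Finset.mem_of_mem_erase hB'))

theorem stmt_2 {X : Type*} (𝒜 : Set (Set X)) (hfin : 𝒜.Finite)
    (h : ∀ A ∈ 𝒜, ∀ B ∈ 𝒜, A ∩ B = ∅ ∨ A \ B = ∅ ∨ B \ A = ∅) :
    ∃ r : X → X → Prop, IsStrictTotalOrder X r ∧ ∀ A ∈ 𝒜, IsRConvex r A := by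
  classical
  obtain ⟨r, hr, hc⟩ := aux_laminar hfin.toFinset
    (fun A hA B hB => h A (hfin.mem_toFinset.mp hA) B (hfin.mem_toFinset.mp hB))
  exact ⟨r, hr, fun A hA => hc A (hfin.mem_toFinset.mpr hA)⟩
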